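/- Let n be a natural number and let M be an n × n matrix over ℂ (or over any nontrivial ring) that is upper unitriangular, i.e. M_{ii} = 1 for all i and M_{ij} = 0 whenever i > j. Let σ and τ be permutations of {1,…,n}, and suppose that the matrix P_σ M P_τ^{-1} is upper triangular, i.e. M_{σ^{-1}(i), τ^{-1}(j)} = 0 whenever i > j. Then σ = τ. -/
import Mathlib


theorem perm_eq_of_unitriangular_conjugate_upper_triangular
    (n : ℕ) (R : Type*) [Ring R] [Nontrivial R]
    (M : Matrix (Fin n) (Fin n) R)
    (hdiag : ∀ i, M i i = 1)
    (hupper : ∀ i j : Fin n, j < i → M i j = 0)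
    (σ τ : Equiv.Perm (Fin n))
    (h : ∀ i j : Fin n, j < i → M (σ⁻¹ i) (τ⁻¹ j) = 0) :
    σ = τ := by
  have hle : ∀ k, (σ k : ℕ) ≤ (τ k : ℕ) := by
    intro k
    by_contra hlt
    push_neg at hlt
    have := h (σ k) (τ k) (by exact_mod_cast hlt)
    simp [hdiag k] at this

  have hsum : ∑ k, (σ k : ℕ) = ∑ k, (τ k : ℕ) := by
    rw [Equiv.sum_comp σ (fun i => (i : ℕ)), Equiv.sum_comp τ (fun i => (i : ℕ))]
  have heq : ∀ k ∈ Finset.univ, (σ k : ℕ) = (τ k : ℕ) :=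
    (Finset.sum_eq_sum_iff_of_le (fun i _ => hle i)).mp hsum
  ext k
  exact heq k (Finset.mem_univ k)
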